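/- For every integer n ≥ 1, 2·Σ_{k=0}^{⌊n/2⌋} (2k+1)!·S(n,2k+1) = B(n) - (-1)^n. -/

import Mathlib

open Finset

/-- Stirling numbers of the second kind. -/
def S : ℕ → ℕ → ℕ
  | 0, 0 => 1
  | 0, _ + 1 => 0
  | _ + 1, 0 => 0
  | n + 1, k + 1 => (k + 1) * S n (k + 1) + S n k

/-- Ordered Bell (Fubini) numbers. -/
def B (n : ℕ) : ℕ := ∑ k ∈ range (n + 1), k.factorial * S n k

lemma S_eq_zero : ∀ n k, n < k → S n k = 0
  | 0, _+1, _ => rfl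
  | n+1, k+1, h => by
      have h1 : n < k + 1 := by omega
      have h2 : n < k := by omega
      simp [S, S_eq_zero n (k+1) h1, S_eq_zero n k h2]

lemma alt (n : ℕ) :
    ∑ k ∈ range (n+1), ((-1:ℤ)^k * k.factorial * S n k) = (-1)^n := by
  induction n with
  | zero => simp [S]
  | succ n ih =>
    set F : ℕ → ℤ := fun k => (-1)^k * (k+1).factorial * S n k with hF
    set h : ℕ → ℤ := fun k => (-1)^k * k.factorial * S n k with hh
    have step : ∀ k, (-1:ℤ)^(k+1) * (k+1).factorial * S (n+1) (k+1)
        = (F (k+1) - F k) + (- h (k+1)) := by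
      intro k
      simp only [hF, hh, S]
      push_cast
      rw [Nat.factorial_succ (k+1)]
      push_cast
      ring
    rw [Finset.sum_range_succ' _ (n+1)]
    simp only [step]
    rw [Finset.sum_add_distrib, Finset.sum_range_sub F]
    have h1 : ∑ k ∈ range (n+1), (- h (k+1)) = -(∑ k ∈ range (n+1), h (k+1)) := by
      rw [Finset.sum_neg_distrib]
    rw [h1]
    have h2 : ∑ k ∈ range (n+1), h (k+1) = (∑ k ∈ range (n+2), h k) - h 0 := by
      rw [Finset.sum_range_succ' h (n+1)]; ring
    have h3 : ∑ k ∈ range (n+2), h k = (-1)^n := by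
      rw [Finset.sum_range_succ]
      have : S n (n+1) = 0 := S_eq_zero n (n+1) (by omega)
      rw [ih]
      simp [hh, this]
    have hFn : F (n+1) = 0 := by
      have : S n (n+1) = 0 := S_eq_zero n (n+1) (by omega)
      simp [hF, this]
    have hF0 : F 0 = S n 0 := by simp [hF]
    have hh0 : h 0 = S n 0 := by simp [hh]
    have hS10 : S (n+1) 0 = 0 := rfl
    rw [h2, h3, hFn, hF0, hh0, hS10]
    push_cast
    ring

lemma pair_sum (f : ℕ → ℤ) (m : ℕ) :
    ∑ k ∈ range (2*m), f k = ∑ k ∈ range m, (f (2*k) + f (2*k+1)) := by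
  induction m with
  | zero => simp
  | succ m ih =>
    rw [show 2*(m+1) = 2*m+1+1 by ring, Finset.sum_range_succ, Finset.sum_range_succ,
      ih, Finset.sum_range_succ]
    ring

theorem stmt10 (n : ℕ) (hn : 1 ≤ n) :
    2 * ∑ k ∈ range (n / 2 + 1), ((2 * k + 1).factorial * S n (2 * k + 1) : ℤ) =
      (B n : ℤ) - (-1) ^ n := by
  have halt := alt n
  set d : ℕ → ℤ := fun k => (k.factorial * S n k : ℤ) - (-1)^k * k.factorial * S n k with hd
  have hB : (B n : ℤ) - (-1)^n = ∑ k ∈ range (n+1), d k := by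
    rw [Finset.sum_sub_distrib, halt, B]
    push_cast
    ring
  have hext : ∑ k ∈ range (n+1), d k = ∑ k ∈ range (2*(n/2+1)), d k := by
    apply Finset.sum_subset
    · exact Finset.range_subset_range.2 (by omega)
    · intro x hx hx'
      simp only [Finset.mem_range] at hx hx'
      have hxn : n < x := by omega
      simp [hd, S_eq_zero n x hxn]
  rw [hB, hext, pair_sum d (n/2+1), Finset.mul_sum]
  apply Finset.sum_congr rfl
  intro k _
  simp only [hd]
  rw [show (-1:ℤ)^(2*k) = 1 by rw [pow_mul]; norm_num,
      show (-1:ℤ)^(2*k+1) = -1 by rw [pow_succ, pow_mul]; norm_num]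
  ring
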